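/- In the allowable multiplicity-type setting, for every integer a ≥ 1, every k ∈ {1,…,T}, and every j ∈ {0,1,…,ℓ}, the scaled distortion entries satisfy ((a+1)/a)·δ_{a+1}(j,k) ≥ δ_a(j,k); that is, ((a+1)/a)·ρ_{k,a+1} ≥ ρ_{k,a} and ((a+1)/a)·(ρ_{k,a+1} − 2m_{j,k}/(a+1)) ≥ ρ_{k,a} − 2m_{j,k}/a for j ≥ 1. -/

import Mathlib

open Finset

/-- The minimum of `f` over the finite set `s` of indices, with the convention that the
minimum over the empty set is `0`. -/
def minOv (s : Finset ℕ) (f : ℕ → ℕ) : ℕ :=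
  if h : s.Nonempty then s.inf' h f else 0

/-- The multiplicity type `(m 1, …, m ℓ)` is *allowable* for maximum multiplicity `μ`:
`∑_{j=1}^ℓ m j ≤ μ` and
`∑_{j=1}^ℓ m j (μ - m j) ≤ (μ+1) (#{j : m j ≠ 0} - 1) min_{j : m j ≠ 0} m j`. -/
def Allowable (ℓ μ : ℕ) (m : ℕ → ℕ) : Prop :=
  (∑ j ∈ Finset.Icc 1 ℓ, m j) ≤ μ ∧
    (∑ j ∈ Finset.Icc 1 ℓ, (m j : ℤ) * ((μ : ℤ) - (m j : ℤ)))
      ≤ ((μ : ℤ) + 1) * ((((Finset.Icc 1 ℓ).filter fun j => m j ≠ 0).card : ℤ) - 1)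
          * (minOv ((Finset.Icc 1 ℓ).filter fun j => m j ≠ 0) m : ℤ)

/-- The score `S = ∑_{i : x i ≥ 1} m (x i) (x̂ i)` of an error pattern `x` and an erasure
pattern `x̂` (positions indexed by `i ∈ {1,…,N}`). -/
def score (N : ℕ) (m : ℕ → ℕ → ℕ) (x xhat : ℕ → ℕ) : ℚ :=
  ∑ i ∈ Finset.Icc 1 N, if 1 ≤ x i then (m (x i) (xhat i) : ℚ) else 0

/-- The cost `C = (1/2) ∑_{i=1}^N ∑_{j=1}^ℓ m j (x̂ i) (m j (x̂ i) + 1)`. -/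
def cost (N ℓ : ℕ) (m : ℕ → ℕ → ℕ) (xhat : ℕ → ℕ) : ℚ :=
  (1 / 2) * ∑ i ∈ Finset.Icc 1 N, ∑ j ∈ Finset.Icc 1 ℓ,
    (m j (xhat i) : ℚ) * ((m j (xhat i) : ℚ) + 1)

/-- `ρ_{k,a} = μ(2a+1-μ)/(a(a+1)) + ∑_{j=1}^ℓ m_{j,k}(m_{j,k}+1)/(a(a+1))`. -/
def rho (μ ℓ : ℕ) (m : ℕ → ℕ → ℕ) (a k : ℕ) : ℚ :=
  (μ : ℚ) * (2 * (a : ℚ) + 1 - (μ : ℚ)) / ((a : ℚ) * ((a : ℚ) + 1)) +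
    ∑ j ∈ Finset.Icc 1 ℓ, (m j k : ℚ) * ((m j k : ℚ) + 1) / ((a : ℚ) * ((a : ℚ) + 1))

/-- The distortion measure `δ_a(0,k) = ρ_{k,a}` and `δ_a(j,k) = ρ_{k,a} - 2 m_{j,k}/a`
for `1 ≤ j ≤ ℓ`. -/
def deltaA (μ ℓ : ℕ) (m : ℕ → ℕ → ℕ) (a j k : ℕ) : ℚ :=
  if j = 0 then rho μ ℓ m a k else rho μ ℓ m a k - 2 * (m j k : ℚ) / (a : ℚ)

/-- The distortion `d_a(x, x̂) = ∑_{i=1}^N δ_a(x i, x̂ i)`. -/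
def distA (N μ ℓ : ℕ) (m : ℕ → ℕ → ℕ) (a : ℕ) (x xhat : ℕ → ℕ) : ℚ :=
  ∑ i ∈ Finset.Icc 1 N, deltaA μ ℓ m a (x i) (xhat i)


lemma rho_key (x Sq M : ℚ) (hx : 1 ≤ x) (hSM : Sq ≤ M*(M+1)) :
    (M*(2*x+1-M)+Sq)/(x*(x+1)) ≤ (x+1)/x * ((M*(2*x+3-M)+Sq)/((x+1)*(x+2))) := by
  have hx0 : 0 < x := by linarith
  have h1 : 0 < x + 1 := by linarith
  have h2 : 0 < x + 2 := by linarith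
  rw [div_mul_div_comm, div_le_div_iff₀ (by positivity) (by positivity)]
  nlinarith [mul_pos hx0 h1, mul_pos hx0 h2, mul_pos h1 h2, sq_nonneg x]

lemma rho_mono (μ ℓ : ℕ) (m : ℕ → ℕ → ℕ) (a k : ℕ) (ha : 1 ≤ a)
    (hsum : (∑ j ∈ Finset.Icc 1 ℓ, m j k) ≤ μ) :
    rho μ ℓ m a k ≤ (((a : ℚ) + 1) / (a : ℚ)) * rho μ ℓ m (a + 1) k := by
  set Sq : ℚ := ∑ j ∈ Finset.Icc 1 ℓ, (m j k : ℚ) * ((m j k : ℚ) + 1) with hSq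
  have hS : Sq ≤ (μ : ℚ) * ((μ : ℚ) + 1) := by
    have h1 : (∑ j ∈ Finset.Icc 1 ℓ, m j k * (m j k + 1)) ≤ μ * (μ + 1) := by
      calc (∑ j ∈ Finset.Icc 1 ℓ, m j k * (m j k + 1))
          ≤ ∑ j ∈ Finset.Icc 1 ℓ, m j k * (μ + 1) := by
            apply Finset.sum_le_sum
            intro j hj
            have hle : m j k ≤ ∑ i ∈ Finset.Icc 1 ℓ, m i k :=
              Finset.single_le_sum (f := fun i => m i k) (fun i _ => Nat.zero_le _) hj
            exact Nat.mul_le_mul_left _ (by omega)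
        _ = (∑ j ∈ Finset.Icc 1 ℓ, m j k) * (μ + 1) := by rw [Finset.sum_mul]
        _ ≤ μ * (μ + 1) := Nat.mul_le_mul_right _ hsum
    rw [hSq]
    exact_mod_cast h1
  have hx : (1 : ℚ) ≤ (a : ℚ) := by exact_mod_cast ha
  have key := rho_key (a : ℚ) Sq (μ : ℚ) hx hS
  have e1 : rho μ ℓ m a k
      = ((μ : ℚ)*(2*(a:ℚ)+1-(μ:ℚ)) + Sq) / ((a:ℚ)*((a:ℚ)+1)) := by
    rw [rho, ← Finset.sum_div, ← hSq]
    ring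
  have e2 : rho μ ℓ m (a+1) k
      = ((μ : ℚ)*(2*(a:ℚ)+3-(μ:ℚ)) + Sq) / (((a:ℚ)+1)*((a:ℚ)+2)) := by
    rw [rho, ← Finset.sum_div, ← hSq]
    push_cast
    ring
  rw [e1, e2]
  exact key

/-- In the allowable multiplicity-type setting, for every integer
`a ≥ 1`, every `k ∈ {1,…,T}`, and every `j ∈ {0,1,…,ℓ}`, the scaled distortion
entries satisfy `((a+1)/a) δ_{a+1}(j,k) ≥ δ_a(j,k)`; in particular
`((a+1)/a) ρ_{k,a+1} ≥ ρ_{k,a}` (the case `j = 0`) and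
`((a+1)/a) (ρ_{k,a+1} - 2 m_{j,k}/(a+1)) ≥ ρ_{k,a} - 2 m_{j,k}/a` for `j ≥ 1`. -/
theorem stmt_11 (μ ℓ T : ℕ) (hμ : 1 ≤ μ) (hℓ : 1 ≤ ℓ) (hT : 1 ≤ T)
    (m : ℕ → ℕ → ℕ)
    (hallow : ∀ k ∈ Finset.Icc 1 T, Allowable ℓ μ (fun j => m j k))
    (htype1 : ∀ j ∈ Finset.Icc 1 ℓ, m j 1 = if j = 1 then μ else 0)
    (a : ℕ) (ha : 1 ≤ a) :
    ∀ k ∈ Finset.Icc 1 T, ∀ j ≤ ℓ,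
      deltaA μ ℓ m a j k ≤ (((a : ℚ) + 1) / (a : ℚ)) * deltaA μ ℓ m (a + 1) j k := by
  intro k hk j hj
  have hsum := (hallow k hk).1
  have hrho := rho_mono μ ℓ m a k ha hsum
  have ha0 : (0 : ℚ) < (a : ℚ) := by exact_mod_cast ha
  by_cases hj0 : j = 0
  · simp [deltaA, hj0, hrho]
  · simp only [deltaA, hj0, if_false]
    have hc : (((a : ℚ) + 1) / (a : ℚ)) * (2 * (m j k : ℚ) / ((a : ℚ) + 1))
        = 2 * (m j k : ℚ) / (a : ℚ) := by
      field_simp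
    have : (((a : ℚ) + 1) / (a : ℚ)) * (rho μ ℓ m (a+1) k - 2 * (m j k : ℚ) / ((a:ℚ)+1))
        = (((a : ℚ) + 1) / (a : ℚ)) * rho μ ℓ m (a+1) k - 2 * (m j k : ℚ) / (a : ℚ) := by
      rw [mul_sub, hc]
    push_cast
    push_cast at this
    rw [this]
    linarith
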